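/- Fix m ∈ ℕ with m ≥ 1 and c > √2, and let B be a standard one-dimensional Brownian motion started at 0, regarded as a random element of C[0,1]. Then almost surely there exists n₀ ∈ ℕ such that for every n ≥ n₀ and every interval [s,t] ∈ Λ_n(m), |B(t) − B(s)| ≤ c·√((t−s)·log(1/(t−s))). -/

import Mathlib

open MeasureTheory ProbabilityTheory Set

/-- A standard one-dimensional Brownian motion started at 0 on the probability
space `(Ω, P)`: `B 0 = 0` a.s., independent increments, Gaussian increments
`B (t+h) - B t ~ N(0, h)`, and a.s. continuous paths on `[0, ∞)`. -/
structure IsStdBM {Ω : Type} [MeasurableSpace Ω] (P : Measure Ω) (B : ℝ → Ω → ℝ) : Prop where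
  isProb : IsProbabilityMeasure P
  meas : ∀ t : ℝ, Measurable (B t)
  start : ∀ᵐ ω ∂P, B 0 ω = 0
  indepIncr : ∀ (n : ℕ) (t : Fin (n + 1) → ℝ), Monotone t → (∀ i, 0 ≤ t i) →
    iIndepFun
      (fun (i : Fin n) => fun ω => B (t i.succ) ω - B (t i.castSucc) ω) P
  gaussIncr : ∀ t h : ℝ, 0 ≤ t → 0 < h →
    P.map (fun ω => B (t + h) ω - B t ω) = gaussianReal 0 h.toNNReal
  cont : ∀ᵐ ω ∂P, ContinuousOn (fun t => B t ω) (Ici 0)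

/-- `Λ_n(m)`: the collection of intervals `[(k−1+b)·2^(−n+a), (k+b)·2^(−n+a)]`
for `k ∈ {1, …, 2^n}` and `a, b ∈ {0, 1/m, …, (m−1)/m}`, encoded as pairs of
endpoints. -/
def LambdaN (n m : ℕ) : Set (ℝ × ℝ) :=
  {p | ∃ k i j : ℕ, 1 ≤ k ∧ k ≤ 2 ^ n ∧ i < m ∧ j < m ∧
    p.1 = ((k : ℝ) - 1 + (j : ℝ) / m) * (2 : ℝ) ^ (-(n : ℝ) + (i : ℝ) / m) ∧
    p.2 = ((k : ℝ) + (j : ℝ) / m) * (2 : ℝ) ^ (-(n : ℝ) + (i : ℝ) / m)}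

open scoped NNReal ENNReal

lemma gauss_tail_Ici {v : ℝ≥0} (hv : v ≠ 0) {ε : ℝ} (hε : 0 ≤ ε) :
    gaussianReal 0 v (Set.Ici ε) ≤ ENNReal.ofReal (Real.exp (-ε ^ 2 / (2 * v))) := by
  have hv' : (0 : ℝ) < v := lt_of_le_of_ne v.coe_nonneg (by exact_mod_cast hv.symm)
  rw [gaussianReal_apply_eq_integral 0 hv]
  apply ENNReal.ofReal_le_ofReal
  calc ∫ x in Set.Ici ε, gaussianPDFReal 0 v x
      ≤ ∫ x in Set.Ici ε, Real.exp (-ε ^ 2 / (2 * v)) * gaussianPDFReal ε v x := by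
        refine setIntegral_mono_on (integrable_gaussianPDFReal 0 v).integrableOn
          (((integrable_gaussianPDFReal ε v).const_mul _).integrableOn) measurableSet_Ici ?_
        intro x hx
        simp only [gaussianPDFReal, sub_zero]
        rw [mul_left_comm, ← Real.exp_add]
        gcongr
        have hx' : ε ≤ x := hx
        rw [← add_div, div_le_div_iff_of_pos_right (show (0:ℝ) < 2*(v:ℝ) by positivity)]
        nlinarith [mul_nonneg hε (sub_nonneg.2 hx')]
    _ ≤ ∫ x, Real.exp (-ε ^ 2 / (2 * v)) * gaussianPDFReal ε v x := by
        refine setIntegral_le_integral ((integrable_gaussianPDFReal ε v).const_mul _)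
          (Filter.Eventually.of_forall fun x => ?_)
        have := gaussianPDFReal_nonneg ε v x
        positivity
    _ = Real.exp (-ε ^ 2 / (2 * v)) := by
        rw [integral_const_mul, integral_gaussianPDFReal_eq_one ε hv, mul_one]

lemma gauss_tail_Iic {v : ℝ≥0} (hv : v ≠ 0) {ε : ℝ} (hε : 0 ≤ ε) :
    gaussianReal 0 v (Set.Iic (-ε)) ≤ ENNReal.ofReal (Real.exp (-ε ^ 2 / (2 * v))) := by
  have hv' : (0 : ℝ) < v := lt_of_le_of_ne v.coe_nonneg (by exact_mod_cast hv.symm)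
  rw [gaussianReal_apply_eq_integral 0 hv]
  apply ENNReal.ofReal_le_ofReal
  calc ∫ x in Set.Iic (-ε), gaussianPDFReal 0 v x
      ≤ ∫ x in Set.Iic (-ε), Real.exp (-ε ^ 2 / (2 * v)) * gaussianPDFReal (-ε) v x := by
        refine setIntegral_mono_on (integrable_gaussianPDFReal 0 v).integrableOn
          (((integrable_gaussianPDFReal (-ε) v).const_mul _).integrableOn) measurableSet_Iic ?_
        intro x hx
        simp only [gaussianPDFReal, sub_zero]
        rw [mul_left_comm, ← Real.exp_add]
        gcongr
        have hx' : x ≤ -ε := hx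
        rw [← add_div, div_le_div_iff_of_pos_right (show (0:ℝ) < 2*(v:ℝ) by positivity)]
        nlinarith [mul_nonneg hε (neg_nonneg.2 (by linarith : x + ε ≤ 0))]
    _ ≤ ∫ x, Real.exp (-ε ^ 2 / (2 * v)) * gaussianPDFReal (-ε) v x := by
        refine setIntegral_le_integral ((integrable_gaussianPDFReal (-ε) v).const_mul _)
          (Filter.Eventually.of_forall fun x => ?_)
        have := gaussianPDFReal_nonneg (-ε) v x
        positivity
    _ = Real.exp (-ε ^ 2 / (2 * v)) := by
        rw [integral_const_mul, integral_gaussianPDFReal_eq_one (-ε) hv, mul_one]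

lemma gauss_tail_abs {v : ℝ≥0} (hv : v ≠ 0) {ε : ℝ} (hε : 0 ≤ ε) :
    gaussianReal 0 v {x : ℝ | ε ≤ |x|} ≤ 2 * ENNReal.ofReal (Real.exp (-ε ^ 2 / (2 * v))) := by
  have hsub : {x : ℝ | ε ≤ |x|} ⊆ Set.Ici ε ∪ Set.Iic (-ε) := by
    intro x hx
    have hx' : ε ≤ |x| := hx
    rcases le_abs.mp hx' with h | h
    · exact Or.inl h
    · exact Or.inr (by simpa using neg_le_neg h)
  calc gaussianReal 0 v {x : ℝ | ε ≤ |x|} ≤ gaussianReal 0 v (Set.Ici ε ∪ Set.Iic (-ε)) :=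
        measure_mono hsub
    _ ≤ gaussianReal 0 v (Set.Ici ε) + gaussianReal 0 v (Set.Iic (-ε)) := measure_union_le _ _
    _ ≤ ENNReal.ofReal (Real.exp (-ε ^ 2 / (2 * v))) + ENNReal.ofReal (Real.exp (-ε ^ 2 / (2 * v))) :=
        add_le_add (gauss_tail_Ici hv hε) (gauss_tail_Iic hv hε)
    _ = 2 * ENNReal.ofReal (Real.exp (-ε ^ 2 / (2 * v))) := (two_mul _).symm

lemma incr_tail {Ω : Type} [MeasurableSpace Ω] {P : Measure Ω} {B : ℝ → Ω → ℝ}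
    (hB : IsStdBM P B) {s h lam : ℝ} (hs : 0 ≤ s) (hh : 0 < h) (hlam : 0 ≤ lam) :
    P {ω | lam ≤ |B (s + h) ω - B s ω|} ≤ 2 * ENNReal.ofReal (Real.exp (-lam ^ 2 / (2 * h))) := by
  have hX : Measurable fun ω => B (s + h) ω - B s ω := (hB.meas _).sub (hB.meas _)
  have hset : MeasurableSet {x : ℝ | lam ≤ |x|} :=
    measurableSet_le measurable_const measurable_id.abs
  have heq : {ω | lam ≤ |B (s + h) ω - B s ω|}
      = (fun ω => B (s + h) ω - B s ω) ⁻¹' {x | lam ≤ |x|} := rfl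
  rw [heq, ← Measure.map_apply hX hset, hB.gaussIncr s h hs hh]
  have hv : h.toNNReal ≠ 0 := by
    simp [Real.toNNReal_eq_zero, not_le, hh]
  have := gauss_tail_abs hv hlam
  rwa [Real.coe_toNNReal _ hh.le] at this

def badSet {Ω : Type} (B : ℝ → Ω → ℝ) (m : ℕ) (c : ℝ) (n : ℕ) : Set Ω :=
  {ω | ∃ p ∈ LambdaN n m,
    c * Real.sqrt ((p.2 - p.1) * Real.log (1 / (p.2 - p.1))) ≤ |B p.2 ω - B p.1 ω|}

lemma level_bound {Ω : Type} [MeasurableSpace Ω] {P : Measure Ω} {B : ℝ → Ω → ℝ}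
    (hB : IsStdBM P B) (m : ℕ) (hm : 1 ≤ m) (c : ℝ) (hc0 : 0 < c) (n : ℕ) (hn : 1 ≤ n) :
    P (badSet B m c n) ≤ (2 ^ n * m * m : ℕ) *
      (2 * ENNReal.ofReal ((2 : ℝ) ^ (-(c ^ 2 / 2) * ((n : ℝ) - 1)))) := by
  classical
  set E : ℕ × ℕ × ℕ → Set Ω := fun x =>
    {ω | c * Real.sqrt ((2 : ℝ) ^ (-(n : ℝ) + (x.2.1 : ℝ) / m) *
        Real.log (1 / (2 : ℝ) ^ (-(n : ℝ) + (x.2.1 : ℝ) / m)))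
      ≤ |B (((x.1 : ℝ) + (x.2.2 : ℝ) / m) * (2 : ℝ) ^ (-(n : ℝ) + (x.2.1 : ℝ) / m)) ω
          - B (((x.1 : ℝ) - 1 + (x.2.2 : ℝ) / m) * (2 : ℝ) ^ (-(n : ℝ) + (x.2.1 : ℝ) / m)) ω|}
    with hE
  set F : Finset (ℕ × ℕ × ℕ) := Finset.Icc 1 (2 ^ n) ×ˢ Finset.range m ×ˢ Finset.range m with hF
  have hsub : badSet B m c n ⊆ ⋃ x ∈ F, E x := by
    rintro ω ⟨p, ⟨k, i, j, hk1, hk2, hi, hj, h1, h2⟩, hle⟩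
    have hmem : (k, i, j) ∈ F := by
      simp [hF, Finset.mem_Icc, hk1, hk2, hi, hj]
    refine Set.mem_biUnion hmem ?_
    rw [h1, h2] at hle
    have hdiff : ((k : ℝ) + (j : ℝ) / m) * (2 : ℝ) ^ (-(n : ℝ) + (i : ℝ) / m)
        - ((k : ℝ) - 1 + (j : ℝ) / m) * (2 : ℝ) ^ (-(n : ℝ) + (i : ℝ) / m)
        = (2 : ℝ) ^ (-(n : ℝ) + (i : ℝ) / m) := by ring
    rw [hdiff] at hle
    exact hle
  have hm' : (0 : ℝ) < m := by exact_mod_cast hm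
  have hbound : ∀ x ∈ F, P (E x) ≤
      2 * ENNReal.ofReal ((2 : ℝ) ^ (-(c ^ 2 / 2) * ((n : ℝ) - 1))) := by
    rintro ⟨k, i, j⟩ hx
    simp only [hF, Finset.mem_product, Finset.mem_Icc, Finset.mem_range] at hx
    obtain ⟨⟨hk1, hk2⟩, hi, hj⟩ := hx
    set L : ℝ := (2 : ℝ) ^ (-(n : ℝ) + (i : ℝ) / m) with hLdef
    have hL : 0 < L := Real.rpow_pos_of_pos two_pos _
    have hk1' : (1 : ℝ) ≤ (k : ℝ) := by exact_mod_cast hk1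
    have hs0 : 0 ≤ ((k : ℝ) - 1 + (j : ℝ) / m) * L :=
      mul_nonneg (by
        have : 0 ≤ (j : ℝ) / m := div_nonneg (Nat.cast_nonneg j) hm'.le
        linarith) hL.le
    have him : (i : ℝ) / m ≤ 1 := by
      rw [div_le_one hm']
      exact_mod_cast hi.le
    have hn' : (1 : ℝ) ≤ (n : ℝ) := by exact_mod_cast hn
    have hlog : Real.log (1 / L) = ((n : ℝ) - (i : ℝ) / m) * Real.log 2 := by
      rw [one_div, Real.log_inv, Real.log_rpow two_pos]; ring
    have hD0 : 0 ≤ Real.log (1 / L) := by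
      rw [hlog]
      exact mul_nonneg (by linarith) (Real.log_nonneg one_le_two)
    have hlam0 : 0 ≤ c * Real.sqrt (L * Real.log (1 / L)) :=
      mul_nonneg hc0.le (Real.sqrt_nonneg _)
    have ht : ((k : ℝ) + (j : ℝ) / m) * L = ((k : ℝ) - 1 + (j : ℝ) / m) * L + L := by ring
    have hEx : E (k, i, j) = {ω | c * Real.sqrt (L * Real.log (1 / L)) ≤
        |B (((k : ℝ) - 1 + (j : ℝ) / m) * L + L) ω - B (((k : ℝ) - 1 + (j : ℝ) / m) * L) ω|} := by
      rw [hE]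
      simp only [← ht]
      rfl
    rw [hEx]
    refine le_trans (incr_tail hB hs0 hL hlam0) ?_
    gcongr
    have hlam2 : (c * Real.sqrt (L * Real.log (1 / L))) ^ 2 = c ^ 2 * (L * Real.log (1 / L)) := by
      rw [mul_pow, Real.sq_sqrt (mul_nonneg hL.le hD0)]
    have hexp : -(c * Real.sqrt (L * Real.log (1 / L))) ^ 2 / (2 * L)
        = -(c ^ 2 / 2) * Real.log (1 / L) := by
      rw [hlam2]; field_simp
    rw [hexp, hlog, Real.rpow_def_of_pos two_pos]
    apply Real.exp_le_exp.mpr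
    have hkey : (c ^ 2 / 2 * Real.log 2) * ((n : ℝ) - 1)
        ≤ (c ^ 2 / 2 * Real.log 2) * ((n : ℝ) - (i : ℝ) / m) :=
      mul_le_mul_of_nonneg_left (by linarith)
        (mul_nonneg (by positivity) (Real.log_nonneg one_le_two))
    nlinarith [hkey]
  calc P (badSet B m c n) ≤ P (⋃ x ∈ F, E x) := measure_mono hsub
    _ ≤ ∑ x ∈ F, P (E x) := measure_biUnion_finset_le F E
    _ ≤ ∑ _x ∈ F, (2 * ENNReal.ofReal ((2 : ℝ) ^ (-(c ^ 2 / 2) * ((n : ℝ) - 1)))) :=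
        Finset.sum_le_sum hbound
    _ = (F.card) • (2 * ENNReal.ofReal ((2 : ℝ) ^ (-(c ^ 2 / 2) * ((n : ℝ) - 1)))) :=
        Finset.sum_const _
    _ = (2 ^ n * m * m : ℕ) *
        (2 * ENNReal.ofReal ((2 : ℝ) ^ (-(c ^ 2 / 2) * ((n : ℝ) - 1)))) := by
        rw [nsmul_eq_mul]
        congr 1
        simp [hF, Nat.card_Icc, mul_assoc]

/-- Almost surely there is `n₀` such that for every `n ≥ n₀` and every interval
`[s,t] ∈ Λ_n(m)`, `|B(t) − B(s)| ≤ c·√((t−s)·log(1/(t−s)))`. -/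
theorem stmt_7 {Ω : Type} [MeasurableSpace Ω] (P : Measure Ω) (B : ℝ → Ω → ℝ)
    (hB : IsStdBM P B) (m : ℕ) (hm : 1 ≤ m) (c : ℝ) (hc : Real.sqrt 2 < c) :
    ∀ᵐ ω ∂P, ∃ n₀ : ℕ, ∀ n : ℕ, n₀ ≤ n → ∀ p ∈ LambdaN n m,
      |B p.2 ω - B p.1 ω| ≤ c * Real.sqrt ((p.2 - p.1) * Real.log (1 / (p.2 - p.1))) := by
  haveI := hB.isProb
  have hc0 : 0 < c := lt_of_le_of_lt (Real.sqrt_nonneg 2) hc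
  have hc2 : (2 : ℝ) < c ^ 2 := by
    nlinarith [Real.sq_sqrt (show (0:ℝ) ≤ 2 by norm_num), Real.sqrt_nonneg 2]
  set r : ℝ := (2 : ℝ) ^ ((1 : ℝ) - c ^ 2 / 2) with hrdef
  have hr0 : 0 < r := Real.rpow_pos_of_pos two_pos _
  have hr1 : r < 1 := Real.rpow_lt_one_of_one_lt_of_neg one_lt_two (by linarith)
  have hterm : ∀ n : ℕ, P (badSet B m c (n + 1)) ≤ ENNReal.ofReal ((4 * (m : ℝ) ^ 2) * r ^ n) := by
    intro n
    refine (level_bound hB m hm c hc0 (n + 1) (by omega)).trans ?_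
    have h1 : ((2 ^ (n + 1) * m * m : ℕ) : ℝ≥0∞)
        = ENNReal.ofReal ((2 ^ (n + 1) * m * m : ℕ) : ℝ) := (ENNReal.ofReal_natCast _).symm
    have h2 : (2 : ℝ≥0∞) = ENNReal.ofReal (2 : ℝ) := by norm_num
    rw [h1, h2, ← ENNReal.ofReal_mul (by positivity), ← ENNReal.ofReal_mul (by positivity)]
    apply ENNReal.ofReal_le_ofReal
    have hrn : r ^ n = (2 : ℝ) ^ ((n : ℝ)) * (2 : ℝ) ^ (-(c ^ 2 / 2) * (n : ℝ)) := by
      rw [hrdef, ← Real.rpow_natCast ((2:ℝ) ^ ((1:ℝ) - c ^ 2 / 2)) n, ← Real.rpow_mul two_pos.le,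
        ← Real.rpow_add two_pos]
      congr 1
      ring
    have hnat : ((2 ^ (n + 1) * m * m : ℕ) : ℝ) = 2 * (2 : ℝ) ^ (n : ℕ) * m * m := by
      push_cast
      ring
    have hexp : (-(c ^ 2 / 2) * (((n : ℕ) + 1 : ℝ) - 1)) = -(c ^ 2 / 2) * (n : ℝ) := by ring
    rw [hnat, hrn]
    rw [show (((n:ℕ) + 1 : ℕ) : ℝ) = ((n : ℝ) + 1) by norm_cast] at *
    have h2n : (2 : ℝ) ^ ((n : ℝ)) = (2 : ℝ) ^ (n : ℕ) := Real.rpow_natCast 2 n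
    rw [h2n]
    have : -(c ^ 2 / 2) * (((n : ℝ) + 1) - 1) = -(c ^ 2 / 2) * (n : ℝ) := by ring
    rw [this]
    nlinarith [Real.rpow_pos_of_pos two_pos (-(c ^ 2 / 2) * (n : ℝ)), pow_pos (two_pos (α := ℝ)) n]
  have hsum : (∑' n : ℕ, P (badSet B m c (n + 1))) ≠ ⊤ := by
    refine ne_top_of_le_ne_top ?_ (ENNReal.tsum_le_tsum hterm)
    have heq : ∀ n : ℕ, ENNReal.ofReal ((4 * (m : ℝ) ^ 2) * r ^ n)
        = ENNReal.ofReal (4 * (m : ℝ) ^ 2) * (ENNReal.ofReal r) ^ n := fun n => by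
      rw [ENNReal.ofReal_mul (by positivity), ENNReal.ofReal_pow hr0.le]
    rw [tsum_congr heq, ENNReal.tsum_mul_left, ENNReal.tsum_geometric]
    refine ENNReal.mul_ne_top ENNReal.ofReal_ne_top (ENNReal.inv_ne_top.mpr ?_)
    rw [ne_eq, tsub_eq_zero_iff_le, not_le]
    exact ENNReal.ofReal_lt_one.mpr hr1
  have h_ae : ∀ᵐ ω ∂P, ∀ᶠ n in Filter.atTop, ω ∉ badSet B m c (n + 1) :=
    MeasureTheory.ae_eventually_notMem hsum
  filter_upwards [h_ae] with ω hω
  obtain ⟨N, hN⟩ := Filter.eventually_atTop.mp hω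
  refine ⟨N + 1, fun n hn p hp => ?_⟩
  obtain ⟨b, rfl⟩ : ∃ b, n = b + 1 := ⟨n - 1, by omega⟩
  have hnb := hN b (by omega)
  by_contra hcon
  push_neg at hcon
  exact hnb ⟨p, hp, hcon.le⟩
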